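/- Let m ≥ 2, n ≥ 1, let A be a real m×m matrix with a_{ij} ≥ 0 for i ≠ j, zero row sums, and irreducible; let ε > 0, and let ξ ∈ ℝᵐ satisfy ξ_i > 0 for all i and ξᵀA = 0. Suppose f : ℝⁿ × [0,∞) → ℝⁿ satisfies condition (11) with positive diagonal matrices P = diag(p₁,…,p_n), Δ = diag(Δ₁,…,Δ_n) and constant η > 0. Let α > 0, let s : [0,∞) → ℝⁿ satisfy s'(t) = f(s(t),t), and let x₁,…,x_m : [0,∞) → ℝⁿ and c : [0,∞) → ℝ with c(0) ≥ 0 satisfy the adaptive controlled network: x₁'(t) = f(x₁(t),t) + c(t)·Σ_{j=1}^m a_{1j} x_j(t) − c(t)ε(x₁(t) − s(t)), x_i'(t) = f(x_i(t),t) + c(t)·Σ_{j=1}^m a_{ij} x_j(t) for i = 2,…,m, and c'(t) = (α/2)·Σ_{i=1}^m (x_i(t) − s(t))ᵀ P (x_i(t) − s(t)). Then ‖x_i(t) − s(t)‖ → 0 as t → ∞ for every i = 1,…,m, and c(t) converges to a finite limit c₀ ≥ 0 as t → ∞. -/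

import Mathlib

open Matrix Filter

private noncomputable def Qf {m : ℕ} (A : Matrix (Fin m) (Fin m) ℝ) (ε : ℝ) (ξ : Fin m → ℝ)
    (i0 : Fin m) (v : Fin m → ℝ) : ℝ :=
  (∑ i, ∑ j, ξ i * A i j * v i * v j) - ε * ξ i0 * v i0 ^ 2

private lemma Qf_ident {m : ℕ} (A : Matrix (Fin m) (Fin m) ℝ)
    (hrow : ∀ i : Fin m, ∑ j, A i j = 0)
    (ξ : Fin m → ℝ) (hleft : ξ ᵥ* A = 0) (v : Fin m → ℝ) :
    ∑ i, ∑ j, ξ i * A i j * v i * v j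
      = -(1/4) * ∑ i, ∑ j, (ξ i * A i j + ξ j * A j i) * (v i - v j)^2 := by
  set w : Fin m → Fin m → ℝ := fun i j => ξ i * A i j + ξ j * A j i with hw
  have hcol : ∀ i, ∑ j, ξ j * A j i = 0 := by
    intro i
    have := congrFun hleft i
    simpa [Matrix.vecMul, dotProduct] using this
  have hwrow : ∀ i, ∑ j, w i j = 0 := by
    intro i
    simp only [hw]
    rw [Finset.sum_add_distrib, ← Finset.mul_sum, hrow i, hcol i, mul_zero, zero_add]
  have hwcol : ∀ j, ∑ i, w i j = 0 := by
    intro j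
    simp only [hw]
    rw [Finset.sum_add_distrib, ← Finset.mul_sum, hrow j, hcol j, mul_zero, add_zero]
  have hswap : ∑ i, ∑ j, ξ j * A j i * v i * v j = ∑ i, ∑ j, ξ i * A i j * v i * v j := by
    rw [Finset.sum_comm]
    refine Finset.sum_congr rfl fun i _ => Finset.sum_congr rfl fun j _ => by ring
  have key : ∑ i, ∑ j, w i j * (v i - v j)^2
      = (∑ i, ∑ j, w i j * v i ^ 2) + (∑ i, ∑ j, w i j * v j ^ 2)
        - 2 * ∑ i, ∑ j, w i j * v i * v j := by
    rw [Finset.mul_sum, ← Finset.sum_add_distrib, ← Finset.sum_sub_distrib]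
    refine Finset.sum_congr rfl fun i _ => ?_
    rw [Finset.mul_sum, ← Finset.sum_add_distrib, ← Finset.sum_sub_distrib]
    refine Finset.sum_congr rfl fun j _ => by ring
  have h1 : ∑ i, ∑ j, w i j * v i ^ 2 = 0 := by
    refine Finset.sum_eq_zero fun i _ => ?_
    rw [← Finset.sum_mul, hwrow i, zero_mul]
  have h2 : ∑ i, ∑ j, w i j * v j ^ 2 = 0 := by
    rw [Finset.sum_comm]
    refine Finset.sum_eq_zero fun j _ => ?_
    rw [← Finset.sum_mul, hwcol j, zero_mul]
  have h3 : ∑ i, ∑ j, w i j * v i * v j = 2 * ∑ i, ∑ j, ξ i * A i j * v i * v j := by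
    simp only [hw]
    rw [two_mul]
    nth_rewrite 2 [← hswap]
    rw [← Finset.sum_add_distrib]
    refine Finset.sum_congr rfl fun i _ => ?_
    rw [← Finset.sum_add_distrib]
    refine Finset.sum_congr rfl fun j _ => by ring
  rw [key, h1, h2, h3] at *
  linarith [key]

private lemma Qf_neg {m : ℕ} (A : Matrix (Fin m) (Fin m) ℝ)
    (hoff : ∀ i j : Fin m, i ≠ j → 0 ≤ A i j)
    (hrow : ∀ i : Fin m, ∑ j, A i j = 0)
    (hirr : ∀ i j : Fin m, i ≠ j → Relation.TransGen (fun p q => A p q ≠ 0) i j)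
    (ε : ℝ) (hε : 0 < ε)
    (ξ : Fin m → ℝ) (hξ : ∀ i, 0 < ξ i) (hleft : ξ ᵥ* A = 0)
    (i0 : Fin m) (v : Fin m → ℝ) (hv : v ≠ 0) :
    Qf A ε ξ i0 v < 0 := by
  set w : Fin m → Fin m → ℝ := fun i j => ξ i * A i j + ξ j * A j i with hw
  have hterm : ∀ i j : Fin m, 0 ≤ w i j * (v i - v j)^2 := by
    intro i j
    rcases eq_or_ne i j with rfl | hij
    · simp
    · exact mul_nonneg (add_nonneg (mul_nonneg (hξ i).le (hoff i j hij))
        (mul_nonneg (hξ j).le (hoff j i hij.symm))) (sq_nonneg _)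
  have hSnn : 0 ≤ ∑ i, ∑ j, w i j * (v i - v j)^2 :=
    Finset.sum_nonneg fun i _ => Finset.sum_nonneg fun j _ => hterm i j
  have hQle : Qf A ε ξ i0 v ≤ 0 := by
    rw [Qf, Qf_ident A hrow ξ hleft v]
    have h2 : 0 ≤ ε * ξ i0 * v i0 ^ 2 :=
      mul_nonneg (mul_nonneg hε.le (hξ i0).le) (sq_nonneg _)
    nlinarith
  rcases hQle.lt_or_eq with h | h
  · exact h
  -- equality case: derive v = 0, contradiction
  exfalso
  rw [Qf, Qf_ident A hrow ξ hleft v] at h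
  have h2 : 0 ≤ ε * ξ i0 * v i0 ^ 2 :=
    mul_nonneg (mul_nonneg hε.le (hξ i0).le) (sq_nonneg _)
  have hS0 : ∑ i, ∑ j, w i j * (v i - v j)^2 = 0 := by nlinarith
  have hT0 : ε * ξ i0 * v i0 ^ 2 = 0 := by nlinarith
  have hvi0 : v i0 = 0 := by
    have : v i0 ^ 2 = 0 := by
      rcases mul_eq_zero.1 hT0 with h' | h'
      · rcases mul_eq_zero.1 h' with h'' | h''
        · exact absurd h'' hε.ne'
        · exact absurd h'' (hξ i0).ne'
      · exact h'
    exact pow_eq_zero_iff (two_ne_zero) |>.1 this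
  have hall : ∀ i j : Fin m, w i j * (v i - v j)^2 = 0 := by
    intro i j
    have h1 := (Finset.sum_eq_zero_iff_of_nonneg
      (fun i _ => Finset.sum_nonneg fun j _ => hterm i j)).1 hS0 i (Finset.mem_univ i)
    exact (Finset.sum_eq_zero_iff_of_nonneg (fun j _ => hterm i j)).1 h1 j (Finset.mem_univ j)
  have hstep : ∀ p q : Fin m, A p q ≠ 0 → v p = v q := by
    intro p q hA
    rcases eq_or_ne p q with rfl | hpq
    · rfl
    · have hwpos : 0 < w p q := by
        have h1 : 0 < ξ p * A p q :=
          mul_pos (hξ p) ((hoff p q hpq).lt_of_ne (Ne.symm hA))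
        have h2 : 0 ≤ ξ q * A q p := mul_nonneg (hξ q).le (hoff q p hpq.symm)
        simp only [hw]; linarith
      have := hall p q
      have hsq : (v p - v q)^2 = 0 := by
        rcases mul_eq_zero.1 this with h' | h'
        · exact absurd h' hwpos.ne'
        · exact h'
      have := pow_eq_zero_iff (two_ne_zero) |>.1 hsq
      linarith [this]
  have hconst : ∀ i : Fin m, v i = 0 := by
    intro i
    rcases eq_or_ne i0 i with rfl | hne
    · exact hvi0
    · have htg : ∀ {a b : Fin m}, Relation.TransGen (fun p q => A p q ≠ 0) a b → v a = v b := by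
        intro a b h
        induction h with
        | single h => exact hstep _ _ h
        | tail _ h ih => exact ih.trans (hstep _ _ h)
      rw [← htg (hirr i0 i hne)]; exact hvi0
  exact hv (funext hconst)

private lemma Qf_hom {m : ℕ} (A : Matrix (Fin m) (Fin m) ℝ) (ε : ℝ) (ξ : Fin m → ℝ)
    (i0 : Fin m) (a : ℝ) (u : Fin m → ℝ) :
    Qf A ε ξ i0 (fun i => a * u i) = a^2 * Qf A ε ξ i0 u := by
  rw [Qf, Qf, mul_sub, Finset.mul_sum]
  congr 1
  · refine Finset.sum_congr rfl fun i _ => ?_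
    rw [Finset.mul_sum]
    exact Finset.sum_congr rfl fun j _ => by ring
  · ring

private lemma negdef_lemma {m : ℕ} (A : Matrix (Fin m) (Fin m) ℝ)
    (hoff : ∀ i j : Fin m, i ≠ j → 0 ≤ A i j)
    (hrow : ∀ i : Fin m, ∑ j, A i j = 0)
    (hirr : ∀ i j : Fin m, i ≠ j → Relation.TransGen (fun p q => A p q ≠ 0) i j)
    (ε : ℝ) (hε : 0 < ε)
    (ξ : Fin m → ℝ) (hξ : ∀ i, 0 < ξ i) (hleft : ξ ᵥ* A = 0)
    (i0 : Fin m) :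
    ∃ lam : ℝ, 0 < lam ∧ ∀ v : Fin m → ℝ,
      Qf A ε ξ i0 v ≤ -lam * ∑ i, v i ^ 2 := by
  set S : Set (Fin m → ℝ) := {v | ∑ i, v i ^ 2 = 1} with hS
  have hg : Continuous (fun v : Fin m → ℝ => ∑ i, v i ^ 2) :=
    continuous_finset_sum _ fun i _ => (continuous_apply i).pow 2
  have hclosed : IsClosed S := isClosed_eq hg continuous_const
  have hsub : S ⊆ Metric.closedBall 0 1 := by
    intro v hv
    rw [Metric.mem_closedBall, dist_zero_right]
    rw [pi_norm_le_iff_of_nonneg zero_le_one]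
    intro i
    have h1 : v i ^ 2 ≤ 1 := by
      rw [← hv]
      exact Finset.single_le_sum (fun j _ => sq_nonneg (v j)) (Finset.mem_univ i)
    rw [Real.norm_eq_abs, abs_le]
    constructor <;> nlinarith
  have hcompact : IsCompact S :=
    (isCompact_closedBall (0 : Fin m → ℝ) 1).of_isClosed_subset hclosed hsub
  have hne : S.Nonempty := by
    refine ⟨fun i => if i = i0 then 1 else 0, ?_⟩
    simp [hS, Finset.sum_ite_eq']
  have hQcont : Continuous (Qf A ε ξ i0) := by
    apply Continuous.sub
    · exact continuous_finset_sum _ fun i _ => continuous_finset_sum _ fun j _ =>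
        (continuous_const.mul (continuous_apply i)).mul (continuous_apply j)
    · exact continuous_const.mul ((continuous_apply i0).pow 2)
  obtain ⟨v₀, hv₀S, hmax⟩ := hcompact.exists_isMaxOn hne hQcont.continuousOn
  have hv₀ne : v₀ ≠ 0 := by
    intro h
    rw [hS] at hv₀S
    simp [h] at hv₀S
  refine ⟨-(Qf A ε ξ i0 v₀), by
    have := Qf_neg A hoff hrow hirr ε hε ξ hξ hleft i0 v₀ hv₀ne
    linarith, ?_⟩
  intro v
  rcases eq_or_ne v 0 with rfl | hvne
  · simp [Qf]
  · set r : ℝ := ∑ i, v i ^ 2 with hr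
    have hrpos : 0 < r := by
      have hnn : 0 ≤ r := Finset.sum_nonneg fun i _ => sq_nonneg _
      rcases hnn.lt_or_eq with h | h
      · exact h
      · exfalso
        apply hvne
        funext i
        have := (Finset.sum_eq_zero_iff_of_nonneg (fun i _ => sq_nonneg (v i))).1 h.symm i
          (Finset.mem_univ i)
        exact pow_eq_zero_iff two_ne_zero |>.1 this
    have hsq : Real.sqrt r > 0 := Real.sqrt_pos.2 hrpos
    set u : Fin m → ℝ := fun i => (Real.sqrt r)⁻¹ * v i with hu
    have huS : u ∈ S := by
      rw [hS, Set.mem_setOf_eq]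
      have : ∀ i, u i ^ 2 = r⁻¹ * v i ^ 2 := by
        intro i
        rw [hu]
        rw [mul_pow, ← Real.sqrt_inv, Real.sq_sqrt (inv_nonneg.2 hrpos.le)]
      simp_rw [this]
      rw [← Finset.mul_sum, ← hr, inv_mul_cancel₀ hrpos.ne']
    have hvu : v = fun i => Real.sqrt r * u i := by
      funext i
      rw [hu]
      field_simp
    calc Qf A ε ξ i0 v = r * Qf A ε ξ i0 u := by
          rw [hvu, Qf_hom, Real.sq_sqrt hrpos.le]
      _ ≤ r * Qf A ε ξ i0 v₀ := by
          have := hmax huS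
          exact mul_le_mul_of_nonneg_left this hrpos.le
      _ = -(-(Qf A ε ξ i0 v₀)) * r := by ring
set_option maxHeartbeats 1000000 in
private lemma deriv_bound {m n : ℕ} (A : Matrix (Fin m) (Fin m) ℝ)
    (ε η lam c cstar α pmin : ℝ)
    (ξ : Fin m → ℝ) (p Δ : Fin n → ℝ) (i0 : Fin m)
    (hξ : ∀ i, 0 < ξ i) (hp : ∀ k, 0 < p k) (hΔ : ∀ k, 0 < Δ k)
    (hη : 0 < η) (hlam : 0 < lam) (hc : 0 ≤ c) (hα : 0 < α)
    (hpmin : 0 < pmin) (hpminle : ∀ k, pmin ≤ p k)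
    (hQ : ∀ v : Fin m → ℝ, Qf A ε ξ i0 v ≤ -lam * ∑ i, v i ^ 2)
    (hstar : 2 * (∑ i, ξ i) * (∑ k, p k * Δ k) + 1 ≤ 2 * lam * cstar * pmin)
    (g φ : Fin m → Fin n → ℝ)
    (hφ : ∀ i, ∑ k, g i k * (p k * (φ i k - Δ k * g i k)) ≤ -η * ∑ k, g i k * g i k) :
    ∑ i, ξ i * ∑ k, p k *
        ((φ i k + c * (∑ j, A i j * g j k) - (if i = i0 then 1 else 0) * (c * ε * g i k)) * g i k
          + g i k * (φ i k + c * (∑ j, A i j * g j k)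
              - (if i = i0 then 1 else 0) * (c * ε * g i k)))
      + (2 * lam / α) * ((α / 2 * ∑ i, ∑ k, g i k * (p k * g i k)) * (c - cstar)
          + (c - cstar) * (α / 2 * ∑ i, ∑ k, g i k * (p k * g i k)))
      ≤ -∑ i, ∑ k, g i k * g i k := by
  set Ξ : ℝ := ∑ i, ξ i with hΞ
  set PD : ℝ := ∑ k, p k * Δ k with hPD
  set E : ℝ := ∑ i, ∑ k, g i k * g i k with hE
  set W : ℝ := ∑ i, ∑ k, g i k * (p k * g i k) with hW
  have hEnn : 0 ≤ E :=
    Finset.sum_nonneg fun i _ => Finset.sum_nonneg fun k _ => mul_self_nonneg _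
  have hEinn : ∀ i, 0 ≤ ∑ k, g i k * g i k :=
    fun i => Finset.sum_nonneg fun k _ => mul_self_nonneg _
  have hWE : pmin * E ≤ W := by
    rw [hE, hW, Finset.mul_sum]
    refine Finset.sum_le_sum fun i _ => ?_
    rw [Finset.mul_sum]
    refine Finset.sum_le_sum fun k _ => ?_
    have h1 : pmin * (g i k * g i k) ≤ p k * (g i k * g i k) :=
      mul_le_mul_of_nonneg_right (hpminle k) (mul_self_nonneg _)
    nlinarith [h1]
  -- cross term simplification
  have hcross : (2 * lam / α) * ((α / 2 * W) * (c - cstar) + (c - cstar) * (α / 2 * W))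
      = 2 * lam * (c - cstar) * W := by
    field_simp
    ring
  -- bound on nonlinear term
  have hPDk : ∀ k, p k * Δ k ≤ PD :=
    fun k => Finset.single_le_sum (fun k _ => (mul_pos (hp k) (hΔ k)).le) (Finset.mem_univ k)
  have hφ' : ∀ i, ∑ k, p k * (g i k * φ i k) ≤ PD * ∑ k, g i k * g i k := by
    intro i
    have h1 := hφ i
    have hsub : ∑ k, g i k * (p k * (φ i k - Δ k * g i k))
        = (∑ k, p k * (g i k * φ i k)) - ∑ k, (p k * Δ k) * (g i k * g i k) := by
      rw [← Finset.sum_sub_distrib]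
      exact Finset.sum_congr rfl fun k _ => by ring
    rw [hsub] at h1
    have h2 : ∑ k, (p k * Δ k) * (g i k * g i k) ≤ PD * ∑ k, g i k * g i k := by
      rw [Finset.mul_sum]
      exact Finset.sum_le_sum fun k _ =>
        mul_le_mul_of_nonneg_right (hPDk k) (mul_self_nonneg _)
    nlinarith [mul_nonneg hη.le (hEinn i)]
  have hPDnn : 0 ≤ PD := Finset.sum_nonneg fun k _ => (mul_pos (hp k) (hΔ k)).le
  -- split the main sum, per i
  have hmain : ∀ i : Fin m, ∑ k, p k *
        ((φ i k + c * (∑ j, A i j * g j k) - (if i = i0 then 1 else 0) * (c * ε * g i k)) * g i k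
          + g i k * (φ i k + c * (∑ j, A i j * g j k)
              - (if i = i0 then 1 else 0) * (c * ε * g i k)))
      = 2 * (∑ k, p k * (g i k * φ i k))
        + 2 * c * (∑ k, p k * (g i k * ∑ j, A i j * g j k))
        - (if i = i0 then 1 else 0) * (2 * c * ε * (∑ k, p k * (g i k * g i k))) := by
    intro i
    have hterm : ∀ k : Fin n, p k *
        ((φ i k + c * (∑ j, A i j * g j k) - (if i = i0 then 1 else 0) * (c * ε * g i k)) * g i k
          + g i k * (φ i k + c * (∑ j, A i j * g j k)
              - (if i = i0 then 1 else 0) * (c * ε * g i k)))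
        = 2 * (p k * (g i k * φ i k))
          + 2 * c * (p k * (g i k * ∑ j, A i j * g j k))
          - (if i = i0 then 1 else 0) * (2 * c * ε * (p k * (g i k * g i k))) := by
      intro k
      by_cases h : i = i0 <;> simp only [h, if_pos, if_neg, if_true, if_false] <;> ring
    rw [Finset.sum_congr rfl fun k _ => hterm k, Finset.sum_sub_distrib,
      Finset.sum_add_distrib, ← Finset.mul_sum, ← Finset.mul_sum, ← Finset.mul_sum]
    congr 1
    rw [← Finset.mul_sum]
  -- rearrangement of the coupling double sum
  have hC : ∑ i, ξ i * ∑ k, p k * (g i k * ∑ j, A i j * g j k)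
      = ∑ k, p k * (∑ i, ∑ j, ξ i * A i j * g i k * g j k) := by
    calc ∑ i, ξ i * ∑ k, p k * (g i k * ∑ j, A i j * g j k)
        = ∑ i, ∑ k, p k * (∑ j, ξ i * A i j * g i k * g j k) := by
          refine Finset.sum_congr rfl fun i _ => ?_
          rw [Finset.mul_sum]
          refine Finset.sum_congr rfl fun k _ => ?_
          have h2 : ∑ j, ξ i * A i j * g i k * g j k
              = ξ i * (g i k * ∑ j, A i j * g j k) := by
            simp only [Finset.mul_sum]
            refine Finset.sum_congr rfl fun j _ => by ring
          rw [h2]; ring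
      _ = ∑ k, ∑ i, p k * (∑ j, ξ i * A i j * g i k * g j k) := Finset.sum_comm
      _ = ∑ k, p k * (∑ i, ∑ j, ξ i * A i j * g i k * g j k) := by
          refine Finset.sum_congr rfl fun k _ => ?_
          rw [Finset.mul_sum]
  have hPin : ξ i0 * (2 * c * ε * (∑ k, p k * (g i0 k * g i0 k)))
      = 2 * c * (∑ k, p k * (ε * ξ i0 * g i0 k ^ 2)) := by
    simp only [Finset.mul_sum]
    exact Finset.sum_congr rfl fun k _ => by ring
  -- total of the weighted sum
  have htot : ∑ i, ξ i * ∑ k, p k *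
        ((φ i k + c * (∑ j, A i j * g j k) - (if i = i0 then 1 else 0) * (c * ε * g i k)) * g i k
          + g i k * (φ i k + c * (∑ j, A i j * g j k)
              - (if i = i0 then 1 else 0) * (c * ε * g i k)))
      = 2 * (∑ i, ξ i * ∑ k, p k * (g i k * φ i k))
        + 2 * c * (∑ k, p k * Qf A ε ξ i0 (fun i => g i k)) := by
    have hQsplit : ∑ k, p k * Qf A ε ξ i0 (fun i => g i k)
        = (∑ k, p k * (∑ i, ∑ j, ξ i * A i j * g i k * g j k))
          - ∑ k, p k * (ε * ξ i0 * g i0 k ^ 2) := by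
      rw [← Finset.sum_sub_distrib]
      refine Finset.sum_congr rfl fun k _ => ?_
      rw [Qf, mul_sub]
    calc ∑ i, ξ i * ∑ k, p k *
        ((φ i k + c * (∑ j, A i j * g j k) - (if i = i0 then 1 else 0) * (c * ε * g i k)) * g i k
          + g i k * (φ i k + c * (∑ j, A i j * g j k)
              - (if i = i0 then 1 else 0) * (c * ε * g i k)))
        = ∑ i, (2 * (ξ i * ∑ k, p k * (g i k * φ i k))
            + 2 * c * (ξ i * ∑ k, p k * (g i k * ∑ j, A i j * g j k))
            - (if i = i0 then ξ i * (2 * c * ε * (∑ k, p k * (g i k * g i k))) else 0)) := by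
          refine Finset.sum_congr rfl fun i _ => ?_
          rw [hmain i]
          by_cases h : i = i0 <;> simp only [h, if_pos, if_neg, if_true, if_false] <;> ring
      _ = 2 * (∑ i, ξ i * ∑ k, p k * (g i k * φ i k))
            + 2 * c * (∑ i, ξ i * ∑ k, p k * (g i k * ∑ j, A i j * g j k))
            - ξ i0 * (2 * c * ε * (∑ k, p k * (g i0 k * g i0 k))) := by
          rw [Finset.sum_sub_distrib, Finset.sum_add_distrib, ← Finset.mul_sum, ← Finset.mul_sum,
            Finset.sum_ite_eq' Finset.univ i0
              (fun i => ξ i * (2 * c * ε * (∑ k, p k * (g i k * g i k)))), if_pos (Finset.mem_univ i0)]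
      _ = _ := by
          rw [hC, hPin, hQsplit]
          ring
  -- bound the coupling term with the quadratic form estimate
  have hSQ : ∑ k, p k * Qf A ε ξ i0 (fun i => g i k) ≤ -lam * W := by
    have h1 : ∀ k, p k * Qf A ε ξ i0 (fun i => g i k) ≤ p k * (-lam * ∑ i, g i k ^ 2) :=
      fun k => mul_le_mul_of_nonneg_left (hQ _) (hp k).le
    have h2 : ∑ k, p k * (-lam * ∑ i, g i k ^ 2) = -lam * W := by
      calc ∑ k, p k * (-lam * ∑ i, g i k ^ 2)
          = ∑ k, ∑ i, -lam * (g i k * (p k * g i k)) := by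
            simp only [Finset.mul_sum]
            refine Finset.sum_congr rfl fun k _ => Finset.sum_congr rfl fun i _ => by ring
        _ = ∑ i, ∑ k, -lam * (g i k * (p k * g i k)) := Finset.sum_comm
        _ = -lam * W := by
            rw [hW]
            simp only [Finset.mul_sum]
    calc ∑ k, p k * Qf A ε ξ i0 (fun i => g i k)
        ≤ ∑ k, p k * (-lam * ∑ i, g i k ^ 2) := Finset.sum_le_sum fun k _ => h1 k
      _ = -lam * W := h2
  -- bound the nonlinear term
  have hT1 : ∑ i, ξ i * ∑ k, p k * (g i k * φ i k) ≤ Ξ * PD * E := by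
    calc ∑ i, ξ i * ∑ k, p k * (g i k * φ i k)
        ≤ ∑ i, ξ i * (PD * ∑ k, g i k * g i k) :=
          Finset.sum_le_sum fun i _ => mul_le_mul_of_nonneg_left (hφ' i) (hξ i).le
      _ ≤ ∑ i, Ξ * (PD * ∑ k, g i k * g i k) :=
          Finset.sum_le_sum fun i _ => mul_le_mul_of_nonneg_right
            (Finset.single_le_sum (fun i _ => (hξ i).le) (Finset.mem_univ i))
            (mul_nonneg hPDnn (hEinn i))
      _ = Ξ * PD * E := by
          rw [hE, ← Finset.mul_sum, ← Finset.mul_sum, ← mul_assoc]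
  -- positivity of cstar
  have hcstar : 0 < cstar := by
    have h1 : 0 < 2 * Ξ * PD + 1 := by
      have : 0 ≤ Ξ := Finset.sum_nonneg fun i _ => (hξ i).le
      nlinarith
    nlinarith [mul_pos hlam hpmin]
  have hWnn : 0 ≤ W := le_trans (by nlinarith) hWE
  -- final assembly
  rw [htot, hcross]
  nlinarith [mul_le_mul_of_nonneg_left hWE (by positivity : (0:ℝ) ≤ 2 * lam * cstar),
    mul_le_mul_of_nonneg_right hstar hEnn,
    mul_le_mul_of_nonneg_left hSQ (by linarith : (0:ℝ) ≤ 2 * c), hT1]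

private noncomputable def Wfun {m n : ℕ} (p : Fin n → ℝ) (x : Fin m → ℝ → Fin n → ℝ)
    (s : ℝ → Fin n → ℝ) (t : ℝ) : ℝ :=
  ∑ i, ∑ k, (x i t k - s t k) * (p k * (x i t k - s t k))

private noncomputable def Efun {m n : ℕ} (x : Fin m → ℝ → Fin n → ℝ)
    (s : ℝ → Fin n → ℝ) (t : ℝ) : ℝ :=
  ∑ i : Fin m, ∑ k : Fin n, (x i t k - s t k) * (x i t k - s t k)

private noncomputable def Ufun {m n : ℕ} (ξ : Fin m → ℝ) (p : Fin n → ℝ) (x : Fin m → ℝ → Fin n → ℝ)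
    (s : ℝ → Fin n → ℝ) (t : ℝ) : ℝ :=
  ∑ i, ξ i * ∑ k, p k * ((x i t k - s t k) * (x i t k - s t k))

private noncomputable def Vfun {m n : ℕ} (ξ : Fin m → ℝ) (p : Fin n → ℝ) (x : Fin m → ℝ → Fin n → ℝ)
    (s : ℝ → Fin n → ℝ) (cc : ℝ → ℝ) (lam α cstar : ℝ) (t : ℝ) : ℝ :=
  Ufun ξ p x s t + (2 * lam / α) * ((cc t - cstar) * (cc t - cstar))


private lemma conv_lemma (U cc Efn V : ℝ → ℝ) (lam α cstar C : ℝ)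
    (hlam : 0 < lam) (hα : 0 < α) (hC : 0 < C)
    (hV : ∀ t, V t = U t + (2 * lam / α) * ((cc t - cstar) * (cc t - cstar)))
    (hUnn : ∀ t, 0 ≤ U t)
    (hEnn : ∀ t, 0 ≤ Efn t)
    (hUE : ∀ t, U t ≤ C * Efn t)
    (hVD : ∀ t : ℝ, 0 ≤ t → ∃ v : ℝ, HasDerivAt V v t ∧ v ≤ -Efn t)
    (hccmono : MonotoneOn cc (Set.Ici 0)) (hcc0 : 0 ≤ cc 0) :
    Tendsto U atTop (nhds 0) ∧ ∃ c₀ : ℝ, 0 ≤ c₀ ∧ Tendsto cc atTop (nhds c₀) := by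
  have hVnn : ∀ t, 0 ≤ V t := fun t => by
    rw [hV t]
    have := hUnn t
    have h2 : 0 ≤ (2 * lam / α) * ((cc t - cstar) * (cc t - cstar)) :=
      mul_nonneg (by positivity) (mul_self_nonneg _)
    linarith
  have hVanti : AntitoneOn V (Set.Ici 0) := by
    apply antitoneOn_of_deriv_nonpos (convex_Ici 0)
    · intro t ht
      obtain ⟨v, hv, _⟩ := hVD t ht
      exact hv.continuousAt.continuousWithinAt
    · intro t ht
      rw [interior_Ici] at ht
      obtain ⟨v, hv, _⟩ := hVD t ht.le
      exact hv.differentiableAt.differentiableWithinAt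
    · intro t ht
      rw [interior_Ici] at ht
      obtain ⟨v, hv, hvle⟩ := hVD t ht.le
      rw [hv.deriv]
      have := hEnn t
      linarith
  have hVb : ∀ t, (0:ℝ) ≤ t → V t ≤ V 0 := fun t ht => hVanti Set.self_mem_Ici ht ht
  have hccub : ∀ t, (0:ℝ) ≤ t → cc t ≤ cstar + Real.sqrt (V 0 * α / (2 * lam)) := by
    intro t ht
    have h1 : (2 * lam / α) * ((cc t - cstar) * (cc t - cstar)) ≤ V 0 := by
      have h2 := hVb t ht
      rw [hV t] at h2
      have h3 := hUnn t
      linarith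
    have h2 : (cc t - cstar) * (cc t - cstar) ≤ V 0 * α / (2 * lam) := by
      calc (cc t - cstar) * (cc t - cstar)
          = ((2 * lam / α) * ((cc t - cstar) * (cc t - cstar))) * (α / (2 * lam)) := by
            field_simp
        _ ≤ V 0 * (α / (2 * lam)) := mul_le_mul_of_nonneg_right h1 (by positivity)
        _ = V 0 * α / (2 * lam) := by ring
    have h3 : cc t - cstar ≤ Real.sqrt (V 0 * α / (2 * lam)) := by
      have h4 : cc t - cstar ≤ |cc t - cstar| := le_abs_self _
      have h5 : |cc t - cstar| = Real.sqrt ((cc t - cstar) * (cc t - cstar)) :=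
        (Real.sqrt_mul_self_eq_abs _).symm
      have h6 := Real.sqrt_le_sqrt h2
      linarith
    linarith
  -- convergence of cc
  have hgmono : Monotone (fun t : ℝ => cc (max t 0)) := fun a b hab =>
    hccmono (le_max_right a 0) (le_max_right b 0) (max_le_max hab le_rfl)
  have hgbdd : BddAbove (Set.range (fun t : ℝ => cc (max t 0))) := by
    refine ⟨cstar + Real.sqrt (V 0 * α / (2 * lam)), ?_⟩
    rintro y ⟨t, rfl⟩
    exact hccub (max t 0) (le_max_right t 0)
  have hgt := tendsto_atTop_ciSup hgmono hgbdd
  have hcceq : (fun t : ℝ => cc (max t 0)) =ᶠ[atTop] cc := by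
    filter_upwards [eventually_ge_atTop (0:ℝ)] with t ht
    rw [max_eq_left ht]
  have hcct : Tendsto cc atTop (nhds (⨆ t : ℝ, cc (max t 0))) := hgt.congr' hcceq
  have hc₀nn : 0 ≤ ⨆ t : ℝ, cc (max t 0) := by
    have h0 : cc (max 0 0) ≤ ⨆ t : ℝ, cc (max t 0) := le_ciSup hgbdd 0
    simp only [max_self] at h0
    linarith
  -- convergence of V
  have hVgmono : Antitone (fun t : ℝ => V (max t 0)) := fun a b hab =>
    hVanti (le_max_right a 0) (le_max_right b 0) (max_le_max hab le_rfl)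
  have hVgbdd : BddBelow (Set.range (fun t : ℝ => V (max t 0))) := by
    refine ⟨0, ?_⟩
    rintro y ⟨t, rfl⟩
    exact hVnn _
  have hVgt := tendsto_atTop_ciInf hVgmono hVgbdd
  have hVeq : (fun t : ℝ => V (max t 0)) =ᶠ[atTop] V := by
    filter_upwards [eventually_ge_atTop (0:ℝ)] with t ht
    rw [max_eq_left ht]
  have hVt : Tendsto V atTop (nhds (⨅ t : ℝ, V (max t 0))) := hVgt.congr' hVeq
  -- convergence of U
  set c₀ : ℝ := ⨆ t : ℝ, cc (max t 0) with hc₀def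
  clear_value c₀
  set Vinf : ℝ := ⨅ t : ℝ, V (max t 0) with hVinfdef
  clear_value Vinf
  set L : ℝ := Vinf - (2 * lam / α) * ((c₀ - cstar) * (c₀ - cstar)) with hLdef
  clear_value L
  have hqt : Tendsto (fun t => (2 * lam / α) * ((cc t - cstar) * (cc t - cstar))) atTop
      (nhds ((2 * lam / α) * ((c₀ - cstar) * (c₀ - cstar)))) :=
    ((hcct.sub tendsto_const_nhds).mul (hcct.sub tendsto_const_nhds)).const_mul _
  have hUt : Tendsto U atTop (nhds L) := by
    rw [hLdef]
    refine (hVt.sub hqt).congr fun t => ?_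
    rw [hV t]
    ring
  have hLnn : 0 ≤ L := ge_of_tendsto hUt (Eventually.of_forall fun t => hUnn t)
  have hL0 : ¬ (0 < L) := by
    intro hL
    set δ : ℝ := L / (2 * C) with hδdef
    clear_value δ
    have hδ : 0 < δ := by
      rw [hδdef]
      exact div_pos hL (by positivity)
    have hev : ∀ᶠ t in atTop, L / 2 ≤ U t :=
      hUt.eventually (eventually_ge_nhds (by linarith : L / 2 < L))
    obtain ⟨T₀, hT₀⟩ := eventually_atTop.mp hev
    set T : ℝ := max T₀ 0 with hTdef
    clear_value T
    have hTnn : (0:ℝ) ≤ T := hTdef ▸ le_max_right T₀ 0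
    have hEδ : ∀ τ, T ≤ τ → δ ≤ Efn τ := by
      intro τ hτ
      have h1 := hT₀ τ ((le_max_left T₀ 0).trans (hTdef ▸ hτ))
      have h2 := hUE τ
      rw [hδdef, div_le_iff₀ (by positivity : (0:ℝ) < 2 * C)]
      nlinarith [h1, h2]
    have hanti2 : AntitoneOn (fun τ => V τ + δ * τ) (Set.Ici T) := by
      apply antitoneOn_of_deriv_nonpos (convex_Ici T)
      · intro τ hτ
        obtain ⟨v, hv, _⟩ := hVD τ (hTnn.trans hτ)
        have hd : HasDerivAt (fun y : ℝ => δ * y) δ τ := by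
          simpa using (hasDerivAt_id τ).const_mul δ
        exact (hv.add hd).continuousAt.continuousWithinAt
      · intro τ hτ
        rw [interior_Ici] at hτ
        obtain ⟨v, hv, _⟩ := hVD τ (hTnn.trans hτ.le)
        have hd : HasDerivAt (fun y : ℝ => δ * y) δ τ := by
          simpa using (hasDerivAt_id τ).const_mul δ
        exact (hv.add hd).differentiableAt.differentiableWithinAt
      · intro τ hτ
        rw [interior_Ici] at hτ
        obtain ⟨v, hv, hvle⟩ := hVD τ (hTnn.trans hτ.le)
        have hd : HasDerivAt (fun y : ℝ => δ * y) δ τ := by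
          simpa using (hasDerivAt_id τ).const_mul δ
        rw [show deriv (fun τ => V τ + δ * τ) τ = v + δ from (hv.add hd).deriv]
        have h1 := hEδ τ hτ.le
        have h2 := hEnn τ
        linarith
    set τ : ℝ := T + (V T + 1) / δ with hτdef
    clear_value τ
    have hτT : T ≤ τ := by
      rw [hτdef]
      have h0 : 0 ≤ (V T + 1) / δ := div_nonneg (by linarith [hVnn T]) hδ.le
      linarith
    have hb := hanti2 Set.self_mem_Ici hτT hτT
    have hδτ : δ * τ = δ * T + (V T + 1) := by
      rw [hτdef]
      field_simp
    have hVτ := hVnn τ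
    have hb2 : V τ + δ * τ ≤ V T + δ * T := hb
    rw [hδτ] at hb2
    linarith
  have hLeq : L = 0 := le_antisymm (not_lt.mp hL0) hLnn
  exact ⟨hLeq ▸ hUt, c₀, hc₀nn, hcct⟩

open Matrix BigOperators Filter

set_option maxHeartbeats 1000000 in
/-- Theorem 5: adaptive adjustment of the coupling strength pins the network:
the states synchronize to `s(t)` and the adaptive coupling strength `c(t)`
converges to a finite nonnegative limit. -/
theorem stmt_8 (m n : ℕ) (hm : 2 ≤ m) (hn : 1 ≤ n)
    (A : Matrix (Fin m) (Fin m) ℝ)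
    (hoff : ∀ i j : Fin m, i ≠ j → 0 ≤ A i j)
    (hrow : ∀ i : Fin m, ∑ j, A i j = 0)
    (hirr : ∀ i j : Fin m, i ≠ j → Relation.TransGen (fun p q => A p q ≠ 0) i j)
    (ε : ℝ) (hε : 0 < ε)
    (ξ : Fin m → ℝ) (hξ : ∀ i, 0 < ξ i) (hleft : ξ ᵥ* A = 0)
    (p Δ : Fin n → ℝ) (hp : ∀ k, 0 < p k) (hΔ : ∀ k, 0 < Δ k)
    (η : ℝ) (hη : 0 < η)
    (f : (Fin n → ℝ) → ℝ → (Fin n → ℝ))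
    (hcond : ∀ t : ℝ, 0 ≤ t → ∀ x y : Fin n → ℝ,
      (x - y) ⬝ᵥ (fun k => p k * (f x t k - Δ k * x k - f y t k + Δ k * y k))
        ≤ -η * ((x - y) ⬝ᵥ (x - y)))
    (α : ℝ) (hα : 0 < α)
    (s : ℝ → Fin n → ℝ) (hs : ∀ t : ℝ, 0 ≤ t → HasDerivAt s (f (s t) t) t)
    (x : Fin m → ℝ → Fin n → ℝ) (cc : ℝ → ℝ) (hcc0 : 0 ≤ cc 0)
    (hx1 : ∀ t : ℝ, 0 ≤ t → HasDerivAt (x ⟨0, by omega⟩)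
      (f (x ⟨0, by omega⟩ t) t + cc t • (∑ j, A ⟨0, by omega⟩ j • x j t)
        - (cc t * ε) • (x ⟨0, by omega⟩ t - s t)) t)
    (hxi : ∀ i : Fin m, i ≠ (⟨0, by omega⟩ : Fin m) → ∀ t : ℝ, 0 ≤ t →
      HasDerivAt (x i) (f (x i t) t + cc t • (∑ j, A i j • x j t)) t)
    (hccder : ∀ t : ℝ, 0 ≤ t → HasDerivAt cc
      (α / 2 * ∑ i : Fin m, (x i t - s t) ⬝ᵥ (fun k => p k * (x i t - s t) k)) t) :
    (∀ i : Fin m, Tendsto (fun t : ℝ => ‖x i t - s t‖) atTop (nhds 0)) ∧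
      ∃ c₀ : ℝ, 0 ≤ c₀ ∧ Tendsto cc atTop (nhds c₀) := by
  have hi0lt : 0 < m := by omega
  set i0 : Fin m := ⟨0, by omega⟩ with hi0
  obtain ⟨lam, hlam, hQ⟩ := negdef_lemma A hoff hrow hirr ε hε ξ hξ hleft i0
  haveI : Nonempty (Fin n) := ⟨⟨0, by omega⟩⟩
  haveI : Nonempty (Fin m) := ⟨i0⟩
  set pmin : ℝ := Finset.univ.inf' Finset.univ_nonempty p with hpmindef
  have hpmin : 0 < pmin := by
    rw [hpmindef, Finset.lt_inf'_iff]
    exact fun k _ => hp k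
  have hpminle : ∀ k, pmin ≤ p k := fun k => Finset.inf'_le _ (Finset.mem_univ k)
  set ximin : ℝ := Finset.univ.inf' Finset.univ_nonempty ξ with hximindef
  have hximin : 0 < ximin := by
    rw [hximindef, Finset.lt_inf'_iff]
    exact fun i _ => hξ i
  have hximinle : ∀ i, ximin ≤ ξ i := fun i => Finset.inf'_le _ (Finset.mem_univ i)
  set Ξ : ℝ := ∑ i, ξ i with hΞdef
  set PD : ℝ := ∑ k, p k * Δ k with hPDdef
  have hΞpos : 0 < Ξ := Finset.sum_pos (fun i _ => hξ i) Finset.univ_nonempty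
  have hPDpos : 0 < PD := Finset.sum_pos (fun k _ => mul_pos (hp k) (hΔ k)) Finset.univ_nonempty
  set cstar : ℝ := (2 * Ξ * PD + 1) / (2 * lam * pmin) with hcsdef
  have hstar : 2 * Ξ * PD + 1 ≤ 2 * lam * cstar * pmin := by
    have heq : 2 * lam * cstar * pmin = 2 * Ξ * PD + 1 := by
      rw [hcsdef]
      field_simp
    linarith
  have hsumA : ∀ (i : Fin m) (t : ℝ) (k : Fin n),
      ∑ j, A i j * x j t k = ∑ j, A i j * (x j t k - s t k) := by
    intro i t k
    have h1 : ∑ j, A i j * (x j t k - s t k)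
        = (∑ j, A i j * x j t k) - (∑ j, A i j) * s t k := by
      rw [Finset.sum_mul, ← Finset.sum_sub_distrib]
      exact Finset.sum_congr rfl fun j _ => by ring
    rw [h1, hrow i, zero_mul, sub_zero]
  have hD : ∀ (i : Fin m) (t : ℝ), 0 ≤ t → ∀ k : Fin n,
      HasDerivAt (fun τ => x i τ k - s τ k)
        (f (x i t) t k - f (s t) t k + cc t * (∑ j, A i j * (x j t k - s t k))
          - (if i = i0 then 1 else 0) * (cc t * ε * (x i t k - s t k))) t := by
    intro i t ht k
    by_cases hii : i = i0
    · subst hii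
      have h1 := (hx1 t ht).sub (hs t ht)
      have h2 := hasDerivAt_pi.mp h1 k
      have h3 : HasDerivAt (fun τ => x i0 τ k - s τ k)
          ((f (x i0 t) t + cc t • (∑ j, A i0 j • x j t)
            - (cc t * ε) • (x i0 t - s t) - f (s t) t) k) t := h2
      have hval : (f (x i0 t) t + cc t • (∑ j, A i0 j • x j t)
            - (cc t * ε) • (x i0 t - s t) - f (s t) t) k
          = f (x i0 t) t k - f (s t) t k + cc t * (∑ j, A i0 j * (x j t k - s t k))
            - (if i0 = i0 then 1 else 0) * (cc t * ε * (x i0 t k - s t k)) := by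
      
        simp only [Pi.add_apply, Pi.sub_apply, Pi.smul_apply, smul_eq_mul,
          Finset.sum_apply, eq_self_iff_true, if_true]
        rw [← hsumA i0 t k]
        ring
      rw [← hval]
      exact h3
    · have h1 := (hxi i hii t ht).sub (hs t ht)
      have h2 := hasDerivAt_pi.mp h1 k
      have h3 : HasDerivAt (fun τ => x i τ k - s τ k)
          ((f (x i t) t + cc t • (∑ j, A i j • x j t) - f (s t) t) k) t := h2
      have hval : (f (x i t) t + cc t • (∑ j, A i j • x j t) - f (s t) t) k
          = f (x i t) t k - f (s t) t k + cc t * (∑ j, A i j * (x j t k - s t k))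
            - (if i = i0 then 1 else 0) * (cc t * ε * (x i t k - s t k)) := by
        simp only [Pi.add_apply, Pi.sub_apply, Pi.smul_apply, smul_eq_mul,
          Finset.sum_apply, if_neg hii]
        rw [← hsumA i t k]
        ring
      rw [← hval]
      exact h3
  have hWfnn : ∀ t, 0 ≤ Wfun p x s t := by
    intro t
    refine Finset.sum_nonneg fun i _ => Finset.sum_nonneg fun k _ => ?_
    nlinarith [hp k, mul_self_nonneg (x i t k - s t k)]
  have hEfnn : ∀ t, 0 ≤ Efun x s t :=
    fun t => Finset.sum_nonneg fun i _ => Finset.sum_nonneg fun k _ => mul_self_nonneg _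
  have hUnn : ∀ t, 0 ≤ Ufun ξ p x s t := by
    intro t
    refine Finset.sum_nonneg fun i _ => mul_nonneg (hξ i).le ?_
    exact Finset.sum_nonneg fun k _ => mul_nonneg (hp k).le (mul_self_nonneg _)
  have hccd : ∀ t, (0:ℝ) ≤ t → HasDerivAt cc (α / 2 * Wfun p x s t) t := by
    intro t ht
    exact hccder t ht
  have hccmono : MonotoneOn cc (Set.Ici 0) := by
    apply monotoneOn_of_deriv_nonneg (convex_Ici 0)
    · exact fun t ht => (hccd t ht).continuousAt.continuousWithinAt
    · intro t ht
      rw [interior_Ici] at ht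
      exact (hccd t ht.le).differentiableAt.differentiableWithinAt
    · intro t ht
      rw [interior_Ici] at ht
      rw [(hccd t ht.le).deriv]
      exact mul_nonneg (by positivity) (hWfnn t)
  have hccnn : ∀ t, (0:ℝ) ≤ t → 0 ≤ cc t :=
    fun t ht => hcc0.trans (hccmono Set.self_mem_Ici ht ht)
  have hUd : ∀ t, (0:ℝ) ≤ t → HasDerivAt (Ufun ξ p x s) (∑ i, ξ i * ∑ k, p k * ((f (x i t) t k - f (s t) t k + cc t * (∑ j, A i j * (x j t k - s t k)) - (if i = i0 then 1 else 0) * (cc t * ε * (x i t k - s t k))) * (x i t k - s t k) + (x i t k - s t k) * (f (x i t) t k - f (s t) t k + cc t * (∑ j, A i j * (x j t k - s t k)) - (if i = i0 then 1 else 0) * (cc t * ε * (x i t k - s t k))))) t := by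
    intro t ht
    exact HasDerivAt.fun_sum fun i _ => HasDerivAt.const_mul (ξ i)
      (HasDerivAt.fun_sum fun k _ => HasDerivAt.const_mul (p k) ((hD i t ht k).mul (hD i t ht k)))
  have hVd : ∀ t, (0:ℝ) ≤ t → HasDerivAt (Vfun ξ p x s cc lam α cstar)
      ((∑ i, ξ i * ∑ k, p k * ((f (x i t) t k - f (s t) t k + cc t * (∑ j, A i j * (x j t k - s t k)) - (if i = i0 then 1 else 0) * (cc t * ε * (x i t k - s t k))) * (x i t k - s t k) + (x i t k - s t k) * (f (x i t) t k - f (s t) t k + cc t * (∑ j, A i j * (x j t k - s t k)) - (if i = i0 then 1 else 0) * (cc t * ε * (x i t k - s t k))))) + ((2 * lam / α) * ((α / 2 * Wfun p x s t) * (cc t - cstar) + (cc t - cstar) * (α / 2 * Wfun p x s t)))) t := by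
    intro t ht
    exact (hUd t ht).add (HasDerivAt.const_mul (2 * lam / α)
      ((((hccd t ht).sub_const cstar)).mul (((hccd t ht).sub_const cstar))))
  have hkey : ∀ t, (0:ℝ) ≤ t → (∑ i, ξ i * ∑ k, p k * ((f (x i t) t k - f (s t) t k + cc t * (∑ j, A i j * (x j t k - s t k)) - (if i = i0 then 1 else 0) * (cc t * ε * (x i t k - s t k))) * (x i t k - s t k) + (x i t k - s t k) * (f (x i t) t k - f (s t) t k + cc t * (∑ j, A i j * (x j t k - s t k)) - (if i = i0 then 1 else 0) * (cc t * ε * (x i t k - s t k))))) + ((2 * lam / α) * ((α / 2 * Wfun p x s t) * (cc t - cstar) + (cc t - cstar) * (α / 2 * Wfun p x s t))) ≤ -Efun x s t := by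
    intro t ht
    have hφi : ∀ i : Fin m, ∑ k, (x i t k - s t k) *
        (p k * (f (x i t) t k - f (s t) t k - Δ k * (x i t k - s t k)))
        ≤ -η * ∑ k, (x i t k - s t k) * (x i t k - s t k) := by
      intro i
      have h1 := hcond t ht (x i t) (s t)
      simp only [dotProduct, Pi.sub_apply] at h1
      calc ∑ k, (x i t k - s t k) *
          (p k * (f (x i t) t k - f (s t) t k - Δ k * (x i t k - s t k)))
          = ∑ k, (x i t k - s t k) *
            (p k * (f (x i t) t k - Δ k * x i t k - f (s t) t k + Δ k * s t k)) :=
            Finset.sum_congr rfl fun k _ => by ring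
        _ ≤ -η * ∑ k, (x i t k - s t k) * (x i t k - s t k) := h1
    exact deriv_bound A ε η lam (cc t) cstar α pmin ξ p Δ i0 hξ hp hΔ hη hlam
      (hccnn t ht) hα hpmin hpminle hQ hstar
      (fun i k => x i t k - s t k) (fun i k => f (x i t) t k - f (s t) t k) hφi
  have hUE : ∀ t, Ufun ξ p x s t ≤ (Ξ * ∑ k, p k) * Efun x s t := by
    intro t
    have h1 : ∀ i : Fin m, (∑ k, p k * ((x i t k - s t k) * (x i t k - s t k)))
        ≤ (∑ k, p k) * ∑ k, (x i t k - s t k) * (x i t k - s t k) := by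
      intro i
      rw [Finset.mul_sum]
      exact Finset.sum_le_sum fun k _ => mul_le_mul_of_nonneg_right
        (Finset.single_le_sum (fun k' _ => (hp k').le) (Finset.mem_univ k)) (mul_self_nonneg _)
    calc Ufun ξ p x s t
        ≤ ∑ i, ξ i * ((∑ k, p k) * ∑ k, (x i t k - s t k) * (x i t k - s t k)) :=
          Finset.sum_le_sum fun i _ => mul_le_mul_of_nonneg_left (h1 i) (hξ i).le
      _ ≤ ∑ i, Ξ * ((∑ k, p k) * ∑ k, (x i t k - s t k) * (x i t k - s t k)) :=
          Finset.sum_le_sum fun i _ => mul_le_mul_of_nonneg_right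
            (Finset.single_le_sum (fun i' _ => (hξ i').le) (Finset.mem_univ i))
            (mul_nonneg (Finset.sum_nonneg fun k _ => (hp k).le)
              (Finset.sum_nonneg fun k _ => mul_self_nonneg _))
      _ = (Ξ * ∑ k, p k) * Efun x s t := by
          rw [← Finset.mul_sum, ← Finset.mul_sum, mul_assoc]
          rfl
  obtain ⟨hU0, c₀, hc₀nn, hcct⟩ := conv_lemma (Ufun ξ p x s) cc (Efun x s)
    (Vfun ξ p x s cc lam α cstar) lam α cstar (Ξ * ∑ k, p k) hlam hα
    (mul_pos hΞpos (Finset.sum_pos (fun k _ => hp k) Finset.univ_nonempty))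
    (fun t => rfl) hUnn hEfnn hUE (fun t ht => ⟨_, hVd t ht, hkey t ht⟩) hccmono hcc0
  refine ⟨?_, c₀, hc₀nn, hcct⟩
  intro i
  have hbound : ∀ t, ‖x i t - s t‖ ≤ Real.sqrt (Ufun ξ p x s t / (ximin * pmin)) := by
    intro t
    have hkey2 : ∀ k : Fin n, (x i t k - s t k) * (x i t k - s t k)
        ≤ Ufun ξ p x s t / (ximin * pmin) := by
      intro k
      have hA : p k * ((x i t k - s t k) * (x i t k - s t k))
          ≤ ∑ k', p k' * ((x i t k' - s t k') * (x i t k' - s t k')) :=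
        Finset.single_le_sum
          (f := fun k' => p k' * ((x i t k' - s t k') * (x i t k' - s t k')))
          (fun k' _ => mul_nonneg (hp k').le (mul_self_nonneg _)) (Finset.mem_univ k)
      have hB := mul_le_mul_of_nonneg_left hA (hξ i).le
      have hC : ξ i * ∑ k', p k' * ((x i t k' - s t k') * (x i t k' - s t k'))
          ≤ Ufun ξ p x s t :=
        Finset.single_le_sum
          (f := fun i' => ξ i' * ∑ k', p k' * ((x i' t k' - s t k') * (x i' t k' - s t k')))
          (fun i' _ => mul_nonneg (hξ i').le
            (Finset.sum_nonneg fun k' _ => mul_nonneg (hp k').le (mul_self_nonneg _)))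
          (Finset.mem_univ i)
      have hDmul := mul_le_mul_of_nonneg_right
        (mul_le_mul (hximinle i) (hpminle k) hpmin.le (hξ i).le)
        (mul_self_nonneg (x i t k - s t k))
      rw [le_div_iff₀ (mul_pos hximin hpmin)]
      nlinarith [hB, hC, hDmul]
    rw [pi_norm_le_iff_of_nonneg (Real.sqrt_nonneg _)]
    intro k
    have h5 := Real.sqrt_le_sqrt (hkey2 k)
    rw [Real.sqrt_mul_self_eq_abs] at h5
    calc ‖(x i t - s t) k‖ = |x i t k - s t k| := by
          rw [Pi.sub_apply, Real.norm_eq_abs]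
      _ ≤ _ := h5
  have hRt : Tendsto (fun t => Ufun ξ p x s t / (ximin * pmin)) atTop (nhds 0) := by
    have h1 := hU0.div_const (ximin * pmin)
    simpa using h1
  have hsq : Tendsto (fun t => Real.sqrt (Ufun ξ p x s t / (ximin * pmin))) atTop (nhds 0) := by
    have h2 := (Real.continuous_sqrt.tendsto 0).comp hRt
    simpa [Function.comp_def] using h2
  exact tendsto_of_tendsto_of_tendsto_of_le_of_le tendsto_const_nhds hsq
    (fun t => norm_nonneg _) hbound
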